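/- Let M, N be two (not necessarily distinct) matchings on [2n] and let s, t ∈ {cr, ne} (possibly s = t). If the multiset of values of s on T(M,l) equals the multiset of values of t on T(N,l) for l = 0 and l = 1, then these multisets are equal for every l ≥ 0. -/

import Mathlib

/-- Number of crossings of a matching given by its set of edges `(a, b)` with `a < b`:
unordered pairs of edges `e, f` with `min e < min f < max e < max f`. -/
def crStat (s : Finset (ℕ × ℕ)) : ℕ :=
  ((s ×ˢ s).filter fun p => p.1.1 < p.2.1 ∧ p.2.1 < p.1.2 ∧ p.1.2 < p.2.2).card

/-- Number of nestings: unordered pairs of edges `e, f` with `min e < min f < max f < max e`. -/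
def neStat (s : Finset (ℕ × ℕ)) : ℕ :=
  ((s ×ˢ s).filter fun p => p.1.1 < p.2.1 ∧ p.2.2 < p.1.2).card

/-- Number of camels (separated pairs): unordered pairs of edges `e, f` with `max e < min f`. -/
def caStat (s : Finset (ℕ × ℕ)) : ℕ :=
  ((s ×ˢ s).filter fun p => p.1.2 < p.2.1).card

/-- `s` is the edge set of a matching on `[2n] = {1, …, 2n}`: `n` edges `(a, b)` with
`a < b`, and every vertex of `[2n]` belongs to exactly one edge. -/
def IsMatching (n : ℕ) (s : Finset (ℕ × ℕ)) : Prop :=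
  s.card = n ∧
  (∀ e ∈ s, e.1 < e.2 ∧ 1 ≤ e.1 ∧ e.2 ≤ 2 * n) ∧
  (∀ v : ℕ, 1 ≤ v → v ≤ 2 * n → ∃! e, e ∈ s ∧ (v = e.1 ∨ v = e.2))

/-- The order isomorphism `[2n] → {2, …, 2n+2} \ {x}`. -/
def shiftV (x v : ℕ) : ℕ := if v + 1 < x then v + 1 else v + 2

/-- The matching on `[2n+2]` obtained from a matching on `[2n]` by relabeling its vertices
order-isomorphically as `{2, …, 2n+2} \ {x}` and adding the new first edge `{1, x}`. -/
def addFirst (x : ℕ) (s : Finset (ℕ × ℕ)) : Finset (ℕ × ℕ) :=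
  insert (1, x) (s.image fun e => (shiftV x e.1, shiftV x e.2))

/-- All matchings obtained from `s` by adding a new first edge in all possible ways. -/
def childrenM (s : Finset (ℕ × ℕ)) : Multiset (Finset (ℕ × ℕ)) :=
  (Finset.Icc 2 (2 * s.card + 2)).val.map fun x => addFirst x s

/-- `levelM s l` is the multiset `T(s, l)` of matchings obtained from `s` by `l` successive
additions of a new first edge in all possible ways. -/
def levelM (s : Finset (ℕ × ℕ)) : ℕ → Multiset (Finset (ℕ × ℕ))
  | 0 => {s}
  | l + 1 => (levelM s l).bind childrenM


/-! ### Multiset sum-convolution -/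

def mconv (A B : Multiset ℕ) : Multiset ℕ := A.bind fun a => B.map (a + ·)

lemma mconv_zero (B : Multiset ℕ) : mconv 0 B = 0 := rfl

lemma mconv_zero_right (A : Multiset ℕ) : mconv A 0 = 0 := by
  simp [mconv]

lemma mconv_cons (a : ℕ) (A B : Multiset ℕ) :
    mconv (a ::ₘ A) B = B.map (a + ·) + mconv A B := by
  simp [mconv, Multiset.cons_bind]

lemma mconv_singleton (a : ℕ) (B : Multiset ℕ) : mconv {a} B = B.map (a + ·) := by
  simp [mconv]

lemma mconv_add (A₁ A₂ B : Multiset ℕ) : mconv (A₁ + A₂) B = mconv A₁ B + mconv A₂ B := by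
  simp [mconv, Multiset.add_bind]

lemma mconv_add_right (A B₁ B₂ : Multiset ℕ) : mconv A (B₁ + B₂) = mconv A B₁ + mconv A B₂ := by
  simp [mconv, Multiset.map_add, Multiset.bind_add]

lemma mconv_map_left (c : ℕ) (A B : Multiset ℕ) :
    mconv (A.map (c + ·)) B = (mconv A B).map (c + ·) := by
  simp only [mconv, Multiset.bind_map, Multiset.map_bind, Multiset.map_map]
  refine Multiset.bind_congr (fun a _ => ?_)
  refine Multiset.map_congr rfl fun b _ => ?_
  simp only [Function.comp_apply]
  omega

lemma mconv_map_right (c : ℕ) (A B : Multiset ℕ) :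
    mconv A (B.map (c + ·)) = (mconv A B).map (c + ·) := by
  simp only [mconv, Multiset.map_bind, Multiset.map_map]
  refine Multiset.bind_congr (fun a _ => ?_)
  refine Multiset.map_congr rfl fun b _ => ?_
  simp only [Function.comp_apply]
  omega

lemma mconv_comm (A B : Multiset ℕ) : mconv A B = mconv B A := by
  induction A using Multiset.induction with
  | empty => rw [mconv_zero, mconv_zero_right]
  | cons a A ih =>
      rw [mconv_cons, ih]
      show _ = B.bind fun b => ((a ::ₘ A).map (b + ·))
      simp only [Multiset.map_cons]
      have : ∀ b : ℕ, (b + a) ::ₘ Multiset.map (fun x => b + x) A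
          = ({b + a} : Multiset ℕ) + Multiset.map (fun x => b + x) A := by
        intro b; rw [Multiset.singleton_add]
      simp only [this, Multiset.bind_add, Multiset.bind_singleton]
      rw [show (Multiset.map (fun b => b + a) B) = Multiset.map (fun b => a + b) B from
        Multiset.map_congr rfl (fun x _ => by omega)]
      rfl

lemma mconv_assoc (A B C : Multiset ℕ) : mconv (mconv A B) C = mconv A (mconv B C) := by
  induction A using Multiset.induction with
  | empty => rw [mconv_zero, mconv_zero, mconv_zero]
  | cons a A ih =>
      rw [mconv_cons, mconv_add, mconv_cons, ← ih, ← mconv_map_left]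

/-! ### hm : sums over k-combinations with repetition of a list -/

def hm : ℕ → List ℕ → Multiset ℕ
  | 0, _ => {0}
  | _+1, [] => 0
  | k+1, a :: xs => ((hm k (a :: xs)).map (a + ·)) + hm (k+1) xs
termination_by k xs => (k, xs.length)

@[simp] lemma hm_zero (xs : List ℕ) : hm 0 xs = {0} := by rw [hm]

@[simp] lemma hm_nil_succ (k : ℕ) : hm (k+1) [] = 0 := by rw [hm]

lemma hm_cons (k : ℕ) (a : ℕ) (xs : List ℕ) :
    hm (k+1) (a :: xs) = ((hm k (a :: xs)).map (a + ·)) + hm (k+1) xs := by rw [hm]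

lemma map_zero_add (X : Multiset ℕ) : X.map (0 + ·) = X := by
  rw [show ((0 + ·) : ℕ → ℕ) = id from funext fun x => by simp, Multiset.map_id]

lemma map_finsum_ms {ι : Type*} (s : Finset ι) (g : ι → Multiset ℕ) (f : ℕ → ℕ) :
    Multiset.map f (∑ i ∈ s, g i) = ∑ i ∈ s, (g i).map f := by
  induction s using Finset.cons_induction with
  | empty => simp
  | cons a s ha ih => rw [Finset.sum_cons, Finset.sum_cons, Multiset.map_add, ih]

lemma map_add_comp (c d : ℕ) (X : Multiset ℕ) :
    (X.map (d + ·)).map (c + ·) = X.map ((c + d) + ·) := by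
  rw [Multiset.map_map]
  exact Multiset.map_congr rfl fun x _ => by simp [Function.comp]; omega

/-- Helper: sum over `range (m+n)` splits. -/
lemma sum_range_add {M : Type*} [AddCommMonoid M] (f : ℕ → M) (m n : ℕ) :
    ∑ i ∈ Finset.range (m + n), f i
      = ∑ i ∈ Finset.range m, f i + ∑ i ∈ Finset.range n, f (m + i) := by
  induction n with
  | zero => simp
  | succ n ih =>
      rw [show m + (n+1) = (m+n)+1 from rfl, Finset.sum_range_succ, ih,
        Finset.sum_range_succ, add_assoc]

/-- Expansion of `hm` over a cons. -/
lemma hm_cons_expand (c : ℕ) (w : List ℕ) :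
    ∀ k, hm k (c :: w) = ∑ u ∈ Finset.range (k+1), (hm (k-u) w).map (u * c + ·) := by
  intro k
  induction k with
  | zero => simp [map_zero_add]
  | succ k ih =>
      rw [hm_cons, ih,
        Finset.sum_range_succ' (fun u => (hm (k+1-u) w).map (u * c + ·)) (k+1)]
      rw [map_finsum_ms]
      simp only [map_add_comp, map_zero_add, Nat.zero_mul, Nat.sub_zero]
      congr 1
      apply Finset.sum_congr rfl
      intro u hu
      rw [show k + 1 - (u + 1) = k - u from by omega]
      exact Multiset.map_congr rfl fun x _ => by ring

lemma hm_single (a c : ℕ) : hm a [c] = {a * c} := by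
  induction a with
  | zero => simp
  | succ a ih =>
      rw [hm_cons, ih, hm_nil_succ, add_zero, Multiset.map_singleton]
      congr 1
      ring

lemma mconv_finsum_left {ι : Type*} (s : Finset ι) (X : ι → Multiset ℕ) (Y : Multiset ℕ) :
    mconv (∑ i ∈ s, X i) Y = ∑ i ∈ s, mconv (X i) Y := by
  induction s using Finset.cons_induction with
  | empty => simp [mconv_zero]
  | cons a s ha ih => rw [Finset.sum_cons, Finset.sum_cons, mconv_add, ih]

lemma mconv_finsum_right {ι : Type*} (s : Finset ι) (X : Multiset ℕ) (Y : ι → Multiset ℕ) :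
    mconv X (∑ i ∈ s, Y i) = ∑ i ∈ s, mconv X (Y i) := by
  induction s using Finset.cons_induction with
  | empty => simp [mconv_zero_right]
  | cons a s ha ih => rw [Finset.sum_cons, Finset.sum_cons, mconv_add_right, ih]

lemma sum_tri_repr {M : Type*} [AddCommMonoid M] (k : ℕ) (g : ℕ → ℕ → M) :
    ∑ u ∈ Finset.range (k+1), ∑ v ∈ Finset.range (k+1-u), g u v
      = ∑ p ∈ (Finset.range (k+1) ×ˢ Finset.range (k+1)).filter (fun p => p.1 + p.2 ≤ k),
          g p.1 p.2 := by
  rw [Finset.sum_filter, Finset.sum_product]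
  apply Finset.sum_congr rfl
  intro u _
  rw [← Finset.sum_filter]
  apply Finset.sum_congr _ (fun v _ => rfl)
  ext v
  simp only [Finset.mem_filter, Finset.mem_range]
  omega

lemma sum_tri_repr2 {M : Type*} [AddCommMonoid M] (k : ℕ) (g : ℕ → ℕ → M) :
    ∑ m ∈ Finset.range (k+1), ∑ u ∈ Finset.range (m+1), g m u
      = ∑ p ∈ (Finset.range (k+1) ×ˢ Finset.range (k+1)).filter (fun p => p.2 ≤ p.1),
          g p.1 p.2 := by
  rw [Finset.sum_filter, Finset.sum_product]
  apply Finset.sum_congr rfl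
  intro m hm'
  simp only [Finset.mem_range] at hm'
  rw [← Finset.sum_filter]
  apply Finset.sum_congr _ (fun v _ => rfl)
  ext v
  simp only [Finset.mem_filter, Finset.mem_range]
  omega

/-- Triangle sum: swap the two indices. -/
lemma tri_comm {M : Type*} [AddCommMonoid M] (k : ℕ) (g : ℕ → ℕ → M) :
    ∑ u ∈ Finset.range (k+1), ∑ v ∈ Finset.range (k+1-u), g u v
      = ∑ v ∈ Finset.range (k+1), ∑ u ∈ Finset.range (k+1-v), g u v := by
  rw [sum_tri_repr k g, sum_tri_repr k (fun v u => g u v)]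
  refine Finset.sum_nbij' (fun p => (p.2, p.1)) (fun p => (p.2, p.1)) ?_ ?_ ?_ ?_ ?_ <;>
    simp only [Finset.mem_filter, Finset.mem_range, Finset.mem_product] <;> intros <;>
    first | omega | rfl | trivial

/-- Triangle sum: group by total. -/
lemma tri_group {M : Type*} [AddCommMonoid M] (k : ℕ) (g : ℕ → ℕ → M) :
    ∑ u ∈ Finset.range (k+1), ∑ v ∈ Finset.range (k+1-u), g u v
      = ∑ m ∈ Finset.range (k+1), ∑ u ∈ Finset.range (m+1), g u (m-u) := by
  rw [sum_tri_repr k g, sum_tri_repr2 k (fun m u => g u (m-u))]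
  refine Finset.sum_nbij' (fun p => (p.1 + p.2, p.1)) (fun p => (p.2, p.1 - p.2)) ?_ ?_ ?_ ?_ ?_ <;>
    simp only [Finset.mem_filter, Finset.mem_range, Finset.mem_product] <;> intro p hp
  · omega
  · omega
  · rw [show p.1 + p.2 - p.1 = p.2 from by omega]
  · rw [show p.2 + (p.1 - p.2) = p.1 from by omega]
  · rw [show p.1 + p.2 - p.1 = p.2 from by omega]

lemma hm_append (B : List ℕ) : ∀ (A : List ℕ) (k : ℕ),
    hm k (A ++ B) = ∑ a ∈ Finset.range (k+1), mconv (hm a A) (hm (k-a) B) := by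
  intro A
  induction A with
  | nil =>
      intro k
      rw [List.nil_append, Finset.sum_eq_single 0]
      · rw [hm_zero, mconv_singleton, Nat.sub_zero, map_zero_add]
      · intro b _ hb
        obtain ⟨b', rfl⟩ : ∃ b', b = b' + 1 := ⟨b - 1, by omega⟩
        rw [hm_nil_succ, mconv_zero]
      · intro h; exact absurd (Finset.mem_range.2 (by omega)) h
  | cons c A ih =>
      intro k
      rw [List.cons_append, hm_cons_expand]
      have lhs_eq : ∀ u ∈ Finset.range (k+1),
          (hm (k-u) (A ++ B)).map (u * c + ·)
          = ∑ a ∈ Finset.range (k+1-u),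
              (mconv (hm a A) (hm (k-u-a) B)).map (u * c + ·) := by
        intro u hu
        rw [ih (k-u), map_finsum_ms, show k - u + 1 = k+1-u from by
          simp only [Finset.mem_range] at hu; omega]
      rw [Finset.sum_congr rfl lhs_eq, tri_group]
      apply Finset.sum_congr rfl
      intro m hm'
      simp only [Finset.mem_range] at hm'
      rw [hm_cons_expand, mconv_finsum_left]
      apply Finset.sum_congr rfl
      intro u hu
      simp only [Finset.mem_range] at hu
      rw [mconv_map_left, show k - u - (m - u) = k - m from by omega]

theorem hm_map_succ : ∀ (k : ℕ) (w : List ℕ),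
    hm k (w.map (fun x => x + 1)) = (hm k w).map (k + ·)
  | 0, w => by simp [map_zero_add]
  | k+1, [] => by simp
  | k+1, c :: w => by
      have h1 := hm_map_succ k (c :: w)
      simp only [List.map_cons] at h1
      rw [List.map_cons, hm_cons, hm_cons, h1, hm_map_succ (k+1) w,
        Multiset.map_add, map_add_comp, map_add_comp,
        show c + 1 + k = k + 1 + c from by omega]
termination_by k w => (k, w.length)

theorem hm_perm : ∀ {xs ys : List ℕ}, xs.Perm ys → ∀ k, hm k xs = hm k ys := by
  intro xs ys h
  induction h with
  | nil => intro k; rfl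
  | cons a h ih =>
      intro k
      induction k using Nat.strong_induction_on with
      | _ k ihk =>
        match k with
        | 0 => simp
        | k+1 => rw [hm_cons, hm_cons, ihk k (by omega), ih (k+1)]
  | swap x y l =>
      intro k
      have expand : ∀ (c d : ℕ),
          hm k (c :: d :: l)
            = ∑ u ∈ Finset.range (k+1), ∑ v ∈ Finset.range (k+1-u),
                (hm (k-u-v) l).map ((u * c + v * d) + ·) := by
        intro c d
        rw [hm_cons_expand]
        apply Finset.sum_congr rfl
        intro u hu
        simp only [Finset.mem_range] at hu
        rw [hm_cons_expand, map_finsum_ms, show k - u + 1 = k + 1 - u from by omega]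
        exact Finset.sum_congr rfl fun v hv => map_add_comp _ _ _
      rw [expand, expand, tri_comm]
      apply Finset.sum_congr rfl
      intro v _
      apply Finset.sum_congr rfl
      intro u _
      rw [show k - u - v = k - v - u from by omega, show u * y + v * x = v * x + u * y from by ring]
  | trans h1 h2 ih1 ih2 => intro k; rw [ih1 k, ih2 k]

/-! ### The key identity -/

def childCr (xs : List ℕ) (j : ℕ) : List ℕ :=
  0 :: ((xs.take (j+1)).map (fun x => x + 1) ++ xs.drop j)

def childNe (xs : List ℕ) (j : ℕ) : List ℕ :=
  0 :: (xs.take (j+1) ++ (xs.drop j).map (fun x => x + 1))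

def Ubb (a b : ℕ) (xs : List ℕ) : Multiset ℕ :=
  ∑ j ∈ Finset.range xs.length,
    (mconv (hm a (xs.take (j+1))) (hm b (xs.drop j))).map (xs.getD j 0 + ·)

lemma mconv_range (n : ℕ) (X : Multiset ℕ) :
    mconv (Multiset.range n) X = ∑ a ∈ Finset.range n, X.map (a + ·) := by
  induction n with
  | zero => simp [mconv_zero]
  | succ n ih => rw [Multiset.range_succ, mconv_cons, ih, Finset.sum_range_succ, add_comm]

theorem Ubb_eq : ∀ (xs : List ℕ) (a b : ℕ), Ubb a b xs = hm (a+b+1) xs := by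
  intro xs
  induction xs with
  | nil => intro a b; rw [show a + b + 1 = (a+b) + 1 from rfl, hm_nil_succ]; rfl
  | cons c ys ih =>
      intro a b
      rw [Ubb, List.length_cons,
        Finset.sum_range_succ' (fun j => (mconv (hm a ((c::ys).take (j+1)))
          (hm b ((c::ys).drop j))).map ((c::ys).getD j 0 + ·)) ys.length]
      -- the j = 0 term
      have f0 : (mconv (hm a ((c::ys).take 1)) (hm b ((c::ys).drop 0))).map
            ((c::ys).getD 0 0 + ·)
          = (hm b (c :: ys)).map ((a+1)*c + ·) := by
        rw [show (c::ys).take 1 = [c] from by simp, List.drop_zero, hm_single,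
          mconv_singleton, List.getD_cons_zero, map_add_comp,
          show c + a * c = (a+1)*c from by ring]
      -- the j+1 terms
      have fj : ∀ j ∈ Finset.range ys.length,
          (mconv (hm a ((c::ys).take (j+1+1))) (hm b ((c::ys).drop (j+1)))).map
            ((c::ys).getD (j+1) 0 + ·)
          = ∑ u ∈ Finset.range (a+1),
              ((mconv (hm (a-u) (ys.take (j+1))) (hm b (ys.drop j))).map
                (ys.getD j 0 + ·)).map (u*c + ·) := by
        intro j _
        rw [List.take_succ_cons, List.drop_succ_cons, List.getD_cons_succ,
          hm_cons_expand, mconv_finsum_left, map_finsum_ms]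
        apply Finset.sum_congr rfl
        intro u _
        rw [mconv_map_left, map_add_comp, map_add_comp,
          show ys.getD j 0 + u * c = u * c + ys.getD j 0 from by omega]
      rw [Finset.sum_congr rfl fj, Finset.sum_comm]
      have sumu : ∀ u ∈ Finset.range (a+1),
          ∑ j ∈ Finset.range ys.length,
            ((mconv (hm (a-u) (ys.take (j+1))) (hm b (ys.drop j))).map
              (ys.getD j 0 + ·)).map (u*c + ·)
          = (hm (a-u+b+1) ys).map (u*c + ·) := by
        intro u _
        rw [← map_finsum_ms]
        rw [show (∑ j ∈ Finset.range ys.length,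
          (mconv (hm (a-u) (ys.take (j+1))) (hm b (ys.drop j))).map (ys.getD j 0 + ·))
            = Ubb (a-u) b ys from rfl, ih]
      rw [Finset.sum_congr rfl sumu, f0]
      -- right hand side
      conv_rhs => rw [hm_cons_expand]
      rw [show a + b + 1 + 1 = (a+1) + (b+1) from by omega,
        sum_range_add (fun u => (hm (a+b+1-u) ys).map (u*c + ·)) (a+1) (b+1)]
      congr 1
      · apply Finset.sum_congr rfl
        intro u hu
        simp only [Finset.mem_range] at hu
        rw [show a - u + b + 1 = a + b + 1 - u from by omega]
      · rw [hm_cons_expand, map_finsum_ms]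
        apply Finset.sum_congr rfl
        intro w _
        rw [map_add_comp, show (a+1)*c + w*c = (a+1+w)*c from by ring,
          show a + b + 1 - (a + 1 + w) = b - w from by omega]

lemma hm_zero_cons (k : ℕ) (L : List ℕ) :
    hm k (0 :: L) = ∑ r ∈ Finset.range (k+1), hm r L := by
  rw [hm_cons_expand]
  have h1 : ∀ u ∈ Finset.range (k+1), (hm (k-u) L).map (u * 0 + ·) = hm (k+1-1-u) L := by
    intro u _
    rw [Nat.mul_zero, map_zero_add, show k+1-1-u = k-u from by omega]
  rw [Finset.sum_congr rfl h1]
  exact Finset.sum_range_reflect (fun r => hm r L) (k+1)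

lemma hm_childCr (k : ℕ) (xs : List ℕ) (j : ℕ) :
    hm k (childCr xs j)
      = ∑ a ∈ Finset.range (k+1), ∑ b ∈ Finset.range (k+1-a),
          (mconv (hm a (xs.take (j+1))) (hm b (xs.drop j))).map (a + ·) := by
  rw [childCr, hm_zero_cons,
    Finset.sum_congr rfl (fun r _ => hm_append (xs.drop j) ((xs.take (j+1)).map
      (fun x => x + 1)) r),
    ← tri_group k (fun a b => mconv (hm a ((xs.take (j+1)).map (fun x => x + 1)))
      (hm b (xs.drop j)))]
  apply Finset.sum_congr rfl
  intro a _
  apply Finset.sum_congr rfl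
  intro b _
  rw [hm_map_succ, mconv_map_left]

lemma hm_childNe (k : ℕ) (xs : List ℕ) (j : ℕ) :
    hm k (childNe xs j)
      = ∑ a ∈ Finset.range (k+1), ∑ b ∈ Finset.range (k+1-a),
          (mconv (hm a (xs.take (j+1))) (hm b (xs.drop j))).map (b + ·) := by
  rw [childNe, hm_zero_cons,
    Finset.sum_congr rfl (fun r _ => hm_append ((xs.drop j).map (fun x => x + 1))
      (xs.take (j+1)) r),
    ← tri_group k (fun a b => mconv (hm a (xs.take (j+1)))
      (hm b ((xs.drop j).map (fun x => x + 1))))]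
  apply Finset.sum_congr rfl
  intro a _
  apply Finset.sum_congr rfl
  intro b _
  rw [hm_map_succ, mconv_map_right]

theorem childCr_sum (k : ℕ) (xs : List ℕ) :
    ∑ j ∈ Finset.range xs.length, (hm k (childCr xs j)).map (xs.getD j 0 + ·)
      = ∑ m ∈ Finset.range (k+1), mconv (Multiset.range (m+1)) (hm (m+1) xs) := by
  have step1 : ∀ j ∈ Finset.range xs.length,
      (hm k (childCr xs j)).map (xs.getD j 0 + ·)
        = ∑ a ∈ Finset.range (k+1), ∑ b ∈ Finset.range (k+1-a),
            ((mconv (hm a (xs.take (j+1))) (hm b (xs.drop j))).map (xs.getD j 0 + ·)).map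
              (a + ·) := by
    intro j _
    rw [hm_childCr, map_finsum_ms]
    apply Finset.sum_congr rfl
    intro a _
    rw [map_finsum_ms]
    apply Finset.sum_congr rfl
    intro b _
    rw [map_add_comp, map_add_comp, show xs.getD j 0 + a = a + xs.getD j 0 from by omega]
  rw [Finset.sum_congr rfl step1, Finset.sum_comm]
  have step2 : ∀ a ∈ Finset.range (k+1),
      ∑ j ∈ Finset.range xs.length, ∑ b ∈ Finset.range (k+1-a),
          ((mconv (hm a (xs.take (j+1))) (hm b (xs.drop j))).map (xs.getD j 0 + ·)).map (a + ·)
        = ∑ b ∈ Finset.range (k+1-a), (hm (a+b+1) xs).map (a + ·) := by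
    intro a _
    rw [Finset.sum_comm]
    apply Finset.sum_congr rfl
    intro b _
    rw [← map_finsum_ms, show (∑ j ∈ Finset.range xs.length,
      (mconv (hm a (xs.take (j+1))) (hm b (xs.drop j))).map (xs.getD j 0 + ·))
        = Ubb a b xs from rfl, Ubb_eq]
  rw [Finset.sum_congr rfl step2,
    tri_group k (fun a b => (hm (a+b+1) xs).map (a + ·))]
  apply Finset.sum_congr rfl
  intro m hm'
  rw [mconv_range]
  apply Finset.sum_congr rfl
  intro a ha
  simp only [Finset.mem_range] at ha
  rw [show a + (m - a) + 1 = m + 1 from by omega]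

theorem childNe_sum (k : ℕ) (xs : List ℕ) :
    ∑ j ∈ Finset.range xs.length, (hm k (childNe xs j)).map (xs.getD j 0 + ·)
      = ∑ m ∈ Finset.range (k+1), mconv (Multiset.range (m+1)) (hm (m+1) xs) := by
  have step1 : ∀ j ∈ Finset.range xs.length,
      (hm k (childNe xs j)).map (xs.getD j 0 + ·)
        = ∑ a ∈ Finset.range (k+1), ∑ b ∈ Finset.range (k+1-a),
            ((mconv (hm a (xs.take (j+1))) (hm b (xs.drop j))).map (xs.getD j 0 + ·)).map
              (b + ·) := by
    intro j _
    rw [hm_childNe, map_finsum_ms]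
    apply Finset.sum_congr rfl
    intro a _
    rw [map_finsum_ms]
    apply Finset.sum_congr rfl
    intro b _
    rw [map_add_comp, map_add_comp, show xs.getD j 0 + b = b + xs.getD j 0 from by omega]
  rw [Finset.sum_congr rfl step1, Finset.sum_comm]
  have step2 : ∀ a ∈ Finset.range (k+1),
      ∑ j ∈ Finset.range xs.length, ∑ b ∈ Finset.range (k+1-a),
          ((mconv (hm a (xs.take (j+1))) (hm b (xs.drop j))).map (xs.getD j 0 + ·)).map (b + ·)
        = ∑ b ∈ Finset.range (k+1-a), (hm (a+b+1) xs).map (b + ·) := by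
    intro a _
    rw [Finset.sum_comm]
    apply Finset.sum_congr rfl
    intro b _
    rw [← map_finsum_ms, show (∑ j ∈ Finset.range xs.length,
      (mconv (hm a (xs.take (j+1))) (hm b (xs.drop j))).map (xs.getD j 0 + ·))
        = Ubb a b xs from rfl, Ubb_eq]
  rw [Finset.sum_congr rfl step2,
    tri_group k (fun a b => (hm (a+b+1) xs).map (b + ·))]
  apply Finset.sum_congr rfl
  intro m hm'
  rw [mconv_range]
  have refl1 := Finset.sum_range_reflect (fun b => (hm (m+1) xs).map (b + ·)) (m+1)
  rw [← refl1]
  apply Finset.sum_congr rfl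
  intro a ha
  simp only [Finset.mem_range] at ha
  rw [show a + (m - a) + 1 = m + 1 from by omega, show m + 1 - 1 - a = m - a from by omega]

/-! ### Matching-level lemmas -/

def openCnt (M : Finset (ℕ × ℕ)) (j : ℕ) : ℕ :=
  (M.filter fun e => e.1 ≤ j ∧ j < e.2).card

def closedCnt (M : Finset (ℕ × ℕ)) (j : ℕ) : ℕ :=
  (M.filter fun e => e.2 ≤ j).card

def PosM (M : Finset (ℕ × ℕ)) : Prop := ∀ e ∈ M, 1 ≤ e.1

lemma shiftV_inj (x : ℕ) : Function.Injective (shiftV x) := by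
  intro u v h
  unfold shiftV at h
  split_ifs at h <;> omega

lemma shiftV_lt_iff (x u v : ℕ) : shiftV x u < shiftV x v ↔ u < v := by
  unfold shiftV
  split_ifs <;> omega

lemma phi_inj (x : ℕ) :
    Function.Injective (fun e : ℕ × ℕ => (shiftV x e.1, shiftV x e.2)) := by
  intro e f h
  simp only [Prod.mk.injEq] at h
  exact Prod.ext (shiftV_inj x h.1) (shiftV_inj x h.2)

lemma shiftV_ge_two {x v : ℕ} (hv : 1 ≤ v) : 2 ≤ shiftV x v := by
  unfold shiftV; split_ifs <;> omega

lemma shiftV_ge_one (x v : ℕ) : 1 ≤ shiftV x v := by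
  unfold shiftV; split_ifs <;> omega

lemma notmem_image {M : Finset (ℕ × ℕ)} (hpos : PosM M) (x : ℕ) :
    (1, x) ∉ M.image (fun e => (shiftV x e.1, shiftV x e.2)) := by
  simp only [Finset.mem_image]
  rintro ⟨e, he, heq⟩
  simp only [Prod.mk.injEq] at heq
  have h2 : 2 ≤ shiftV x e.1 := shiftV_ge_two (hpos e he)
  omega

lemma posM_addFirst (M : Finset (ℕ × ℕ)) (x : ℕ) : PosM (addFirst x M) := by
  intro e he
  rw [addFirst, Finset.mem_insert] at he
  rcases he with rfl | he
  · exact le_refl 1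
  · simp only [Finset.mem_image] at he
    obtain ⟨f, _, rfl⟩ := he
    exact le_trans (by norm_num) (shiftV_ge_one x f.1)

lemma card_addFirst {M : Finset (ℕ × ℕ)} (hpos : PosM M) (x : ℕ) :
    (addFirst x M).card = M.card + 1 := by
  rw [addFirst, Finset.card_insert_of_notMem (notmem_image hpos x),
    Finset.card_image_of_injective _ (phi_inj x)]

/-- Counting elements of `addFirst x M` satisfying a predicate. -/
lemma count_addFirst {M : Finset (ℕ × ℕ)} (hpos : PosM M) (x : ℕ)
    (Q : ℕ × ℕ → Prop) [DecidablePred Q] :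
    ((addFirst x M).filter Q).card
      = (if Q (1, x) then 1 else 0)
        + (M.filter fun e => Q (shiftV x e.1, shiftV x e.2)).card := by
  rw [addFirst, Finset.filter_insert]
  by_cases hQ : Q (1, x)
  · rw [if_pos hQ, if_pos hQ, Finset.card_insert_of_notMem
      (fun hmem => notmem_image hpos x (Finset.filter_subset _ _ hmem)),
      Finset.filter_image, Finset.card_image_of_injective _ (phi_inj x), add_comm]
  · rw [if_neg hQ, if_neg hQ, Finset.filter_image,
      Finset.card_image_of_injective _ (phi_inj x), zero_add]

lemma crStat_addFirst {M : Finset (ℕ × ℕ)} (hpos : PosM M) (j : ℕ) :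
    crStat (addFirst (j+2) M) = crStat M + openCnt M j := by
  classical
  set T := M.image (fun e => (shiftV (j+2) e.1, shiftV (j+2) e.2)) with hT
  have hnot : (1, j+2) ∉ T := notmem_image hpos (j+2)
  rw [crStat, addFirst, ← hT, Finset.card_filter, Finset.sum_product,
    Finset.sum_insert hnot]
  have hfirst : ∑ f ∈ insert (1, j+2) T,
      (if ((1:ℕ), j+2).1 < f.1 ∧ f.1 < ((1:ℕ), j+2).2 ∧ ((1:ℕ), j+2).2 < f.2 then 1 else 0)
      = openCnt M j := by
    rw [Finset.sum_insert hnot]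
    have h0 : (if ((1:ℕ), j+2).1 < ((1:ℕ), j+2).1 ∧ ((1:ℕ), j+2).1 < ((1:ℕ), j+2).2
        ∧ ((1:ℕ), j+2).2 < ((1:ℕ), j+2).2 then 1 else 0) = 0 := by
      simp
    rw [hT, Finset.sum_image (fun e _ f _ h => phi_inj (j+2) h)]
    have hcong : ∀ e ∈ M,
        (if ((1:ℕ), j+2).1 < (shiftV (j+2) e.1, shiftV (j+2) e.2).1
            ∧ (shiftV (j+2) e.1, shiftV (j+2) e.2).1 < ((1:ℕ), j+2).2
            ∧ ((1:ℕ), j+2).2 < (shiftV (j+2) e.1, shiftV (j+2) e.2).2 then 1 else 0)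
          = (if e.1 ≤ j ∧ j < e.2 then 1 else 0) := by
      intro e he
      have hp := hpos e he
      congr 1
      simp only [eq_iff_iff]
      unfold shiftV
      split_ifs <;> omega
    rw [Finset.sum_congr rfl hcong, ← Finset.card_filter, openCnt]
    simp
  rw [hfirst]
  have hsecond : ∑ e ∈ T, ∑ f ∈ insert ((1:ℕ), j+2) T,
      (if e.1 < f.1 ∧ f.1 < e.2 ∧ e.2 < f.2 then 1 else 0) = crStat M := by
    rw [hT, Finset.sum_image (fun e _ f _ h => phi_inj (j+2) h)]
    have hcong : ∀ e ∈ M,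
        ∑ f ∈ insert ((1:ℕ), j+2) (M.image (fun e => (shiftV (j+2) e.1, shiftV (j+2) e.2))),
          (if (shiftV (j+2) e.1, shiftV (j+2) e.2).1 < f.1
              ∧ f.1 < (shiftV (j+2) e.1, shiftV (j+2) e.2).2
              ∧ (shiftV (j+2) e.1, shiftV (j+2) e.2).2 < f.2 then 1 else 0)
        = ∑ f ∈ M, (if e.1 < f.1 ∧ f.1 < e.2 ∧ e.2 < f.2 then 1 else 0) := by
      intro e he
      rw [Finset.sum_insert hnot]
      have hz : (if (shiftV (j+2) e.1, shiftV (j+2) e.2).1 < ((1:ℕ), j+2).1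
          ∧ ((1:ℕ), j+2).1 < (shiftV (j+2) e.1, shiftV (j+2) e.2).2
          ∧ (shiftV (j+2) e.1, shiftV (j+2) e.2).2 < ((1:ℕ), j+2).2 then 1 else 0) = 0 := by
        have h1 := shiftV_ge_one (j+2) e.1
        simp only [ite_eq_right_iff]
        intro hcontra
        omega
      rw [hz, zero_add, Finset.sum_image (fun e _ f _ h => phi_inj (j+2) h)]
      apply Finset.sum_congr rfl
      intro f _
      congr 1
      simp only [eq_iff_iff]
      rw [shiftV_lt_iff, shiftV_lt_iff, shiftV_lt_iff]
    rw [Finset.sum_congr rfl hcong, crStat, Finset.card_filter, Finset.sum_product]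
  rw [hsecond, add_comm]

lemma neStat_addFirst {M : Finset (ℕ × ℕ)} (hpos : PosM M) (j : ℕ) :
    neStat (addFirst (j+2) M) = neStat M + closedCnt M j := by
  classical
  set T := M.image (fun e => (shiftV (j+2) e.1, shiftV (j+2) e.2)) with hT
  have hnot : (1, j+2) ∉ T := notmem_image hpos (j+2)
  rw [neStat, addFirst, ← hT, Finset.card_filter, Finset.sum_product,
    Finset.sum_insert hnot]
  have hfirst : ∑ f ∈ insert ((1:ℕ), j+2) T,
      (if ((1:ℕ), j+2).1 < f.1 ∧ f.2 < ((1:ℕ), j+2).2 then 1 else 0)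
      = closedCnt M j := by
    rw [Finset.sum_insert hnot]
    have h0 : (if ((1:ℕ), j+2).1 < ((1:ℕ), j+2).1 ∧ ((1:ℕ), j+2).2 < ((1:ℕ), j+2).2
        then 1 else 0) = 0 := by simp
    rw [h0, zero_add, hT, Finset.sum_image (fun e _ f _ h => phi_inj (j+2) h)]
    have hcong : ∀ e ∈ M,
        (if ((1:ℕ), j+2).1 < (shiftV (j+2) e.1, shiftV (j+2) e.2).1
            ∧ (shiftV (j+2) e.1, shiftV (j+2) e.2).2 < ((1:ℕ), j+2).2 then 1 else 0)
          = (if e.2 ≤ j then 1 else 0) := by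
      intro e he
      have hp := hpos e he
      congr 1
      simp only [eq_iff_iff]
      unfold shiftV
      split_ifs <;> omega
    rw [Finset.sum_congr rfl hcong, ← Finset.card_filter, closedCnt]
  rw [hfirst]
  have hsecond : ∑ e ∈ T, ∑ f ∈ insert ((1:ℕ), j+2) T,
      (if e.1 < f.1 ∧ f.2 < e.2 then 1 else 0) = neStat M := by
    rw [hT, Finset.sum_image (fun e _ f _ h => phi_inj (j+2) h)]
    have hcong : ∀ e ∈ M,
        ∑ f ∈ insert ((1:ℕ), j+2) (M.image (fun e => (shiftV (j+2) e.1, shiftV (j+2) e.2))),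
          (if (shiftV (j+2) e.1, shiftV (j+2) e.2).1 < f.1
              ∧ f.2 < (shiftV (j+2) e.1, shiftV (j+2) e.2).2 then 1 else 0)
        = ∑ f ∈ M, (if e.1 < f.1 ∧ f.2 < e.2 then 1 else 0) := by
      intro e he
      rw [Finset.sum_insert hnot]
      have hz : (if (shiftV (j+2) e.1, shiftV (j+2) e.2).1 < ((1:ℕ), j+2).1
          ∧ ((1:ℕ), j+2).2 < (shiftV (j+2) e.1, shiftV (j+2) e.2).2 then 1 else 0) = 0 := by
        have h1 := shiftV_ge_one (j+2) e.1
        simp only [ite_eq_right_iff]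
        intro hcontra
        omega
      rw [hz, zero_add, Finset.sum_image (fun e _ f _ h => phi_inj (j+2) h)]
      apply Finset.sum_congr rfl
      intro f _
      congr 1
      simp only [eq_iff_iff]
      rw [shiftV_lt_iff, shiftV_lt_iff]
    rw [Finset.sum_congr rfl hcong, neStat, Finset.card_filter, Finset.sum_product]
  rw [hsecond, add_comm]

lemma openCnt_addFirst_zero {M : Finset (ℕ × ℕ)} (hpos : PosM M) (j : ℕ) :
    openCnt (addFirst (j+2) M) 0 = 0 := by
  rw [openCnt, count_addFirst hpos]
  have h1 : (if ((1:ℕ), j+2).1 ≤ 0 ∧ 0 < ((1:ℕ), j+2).2 then 1 else 0) = 0 := by simp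
  rw [h1, zero_add, Finset.card_eq_zero, Finset.filter_eq_empty_iff]
  intro e _
  have h2 := shiftV_ge_one (j+2) e.1
  simp only [not_and]
  intro h
  omega

lemma openCnt_addFirst_mid {M : Finset (ℕ × ℕ)} (hpos : PosM M) {i j : ℕ} (hij : i ≤ j) :
    openCnt (addFirst (j+2) M) (i+1) = openCnt M i + 1 := by
  rw [openCnt, count_addFirst hpos]
  have h1 : (if ((1:ℕ), j+2).1 ≤ i+1 ∧ i+1 < ((1:ℕ), j+2).2 then 1 else 0) = 1 := by
    have h : ((1:ℕ), j+2).1 ≤ i+1 ∧ i+1 < ((1:ℕ), j+2).2 := by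
      constructor <;> simp <;> omega
    rw [if_pos h]
  have h2 : ∀ e ∈ M,
      ((shiftV (j+2) e.1, shiftV (j+2) e.2).1 ≤ i+1
        ∧ i+1 < (shiftV (j+2) e.1, shiftV (j+2) e.2).2)
        ↔ (e.1 ≤ i ∧ i < e.2) := by
    intro e _
    simp only
    unfold shiftV
    split_ifs <;> omega
  rw [h1, Finset.filter_congr h2, openCnt, add_comm]

lemma openCnt_addFirst_late {M : Finset (ℕ × ℕ)} (hpos : PosM M) {i j : ℕ} (hij : j ≤ i) :
    openCnt (addFirst (j+2) M) (i+2) = openCnt M i := by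
  rw [openCnt, count_addFirst hpos]
  have h1 : (if ((1:ℕ), j+2).1 ≤ i+2 ∧ i+2 < ((1:ℕ), j+2).2 then 1 else 0) = 0 := by
    simp only [ite_eq_right_iff]
    intro h
    omega
  have h2 : ∀ e ∈ M,
      ((shiftV (j+2) e.1, shiftV (j+2) e.2).1 ≤ i+2
        ∧ i+2 < (shiftV (j+2) e.1, shiftV (j+2) e.2).2)
        ↔ (e.1 ≤ i ∧ i < e.2) := by
    intro e _
    simp only
    unfold shiftV
    split_ifs <;> omega
  rw [h1, Finset.filter_congr h2, openCnt, zero_add]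

lemma closedCnt_addFirst_zero {M : Finset (ℕ × ℕ)} (hpos : PosM M) (j : ℕ) :
    closedCnt (addFirst (j+2) M) 0 = 0 := by
  rw [closedCnt, count_addFirst hpos]
  have h1 : (if ((1:ℕ), j+2).2 ≤ 0 then 1 else 0) = 0 := by simp
  rw [h1, zero_add, Finset.card_eq_zero, Finset.filter_eq_empty_iff]
  intro e _
  have h2 := shiftV_ge_one (j+2) e.2
  simp only
  omega

lemma closedCnt_addFirst_mid {M : Finset (ℕ × ℕ)} (hpos : PosM M) {i j : ℕ} (hij : i ≤ j) :
    closedCnt (addFirst (j+2) M) (i+1) = closedCnt M i := by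
  rw [closedCnt, count_addFirst hpos]
  have h1 : (if ((1:ℕ), j+2).2 ≤ i+1 then 1 else 0) = 0 := by
    simp only [ite_eq_right_iff]
    intro h
    omega
  have h2 : ∀ e ∈ M,
      ((shiftV (j+2) e.1, shiftV (j+2) e.2).2 ≤ i+1) ↔ (e.2 ≤ i) := by
    intro e _
    simp only
    unfold shiftV
    split_ifs <;> omega
  rw [h1, Finset.filter_congr h2, closedCnt, zero_add]

lemma closedCnt_addFirst_late {M : Finset (ℕ × ℕ)} (hpos : PosM M) {i j : ℕ} (hij : j ≤ i) :
    closedCnt (addFirst (j+2) M) (i+2) = closedCnt M i + 1 := by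
  rw [closedCnt, count_addFirst hpos]
  have h1 : (if ((1:ℕ), j+2).2 ≤ i+2 then 1 else 0) = 1 := by
    have h : ((1:ℕ), j+2).2 ≤ i+2 := by simp; omega
    rw [if_pos h]
  have h2 : ∀ e ∈ M,
      ((shiftV (j+2) e.1, shiftV (j+2) e.2).2 ≤ i+2) ↔ (e.2 ≤ i) := by
    intro e _
    simp only
    unfold shiftV
    split_ifs <;> omega
  rw [h1, Finset.filter_congr h2, closedCnt, add_comm]

/-! ### Gap lists -/

def gapsCr (M : Finset (ℕ × ℕ)) : List ℕ := (List.range (2*M.card+1)).map (openCnt M)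

def gapsNe (M : Finset (ℕ × ℕ)) : List ℕ := (List.range (2*M.card+1)).map (closedCnt M)

lemma drop_range (m n : ℕ) (h : m ≤ n) :
    (List.range n).drop m = (List.range (n-m)).map (m + ·) := by
  rw [show n = m + (n-m) from by omega, List.range_add, List.drop_left'
    (by rw [List.length_range]), show m + (n-m) - m = n - m from by omega]

lemma getD_map_range {n j : ℕ} (f : ℕ → ℕ) (h : j < n) :
    ((List.range n).map f).getD j 0 = f j := by
  rw [List.getD_eq_getElem _ _ (by simp [h])]
  simp

lemma gapsCr_addFirst {M : Finset (ℕ × ℕ)} (hpos : PosM M) {j : ℕ} (hj : j ≤ 2*M.card) :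
    gapsCr (addFirst (j+2) M) = childCr (gapsCr M) j := by
  rw [childCr, gapsCr, gapsCr, card_addFirst hpos, ← List.map_take, List.take_range,
    show (j+1) ⊓ (2*M.card+1) = j+1 from by omega,
    ← List.map_drop, drop_range j (2*M.card+1) (by omega),
    show 2*(M.card+1)+1 = (j+2) + (2*M.card+1-j) from by omega,
    List.range_add, List.map_append, show j+2 = (j+1)+1 from rfl,
    List.range_succ_eq_map, List.map_cons, List.map_map, List.map_map, List.map_map,
    List.map_map, List.cons_append]
  congr 1
  · exact openCnt_addFirst_zero hpos j
  congr 1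
  · apply List.map_congr_left
    intro i hi
    rw [List.mem_range] at hi
    simp only [Function.comp_apply]
    exact openCnt_addFirst_mid hpos (by omega)
  · apply List.map_congr_left
    intro i hi
    simp only [Function.comp_apply]
    rw [show j + 1 + 1 + i = (j+i) + 2 from by omega]
    exact openCnt_addFirst_late hpos (by omega)

lemma gapsNe_addFirst {M : Finset (ℕ × ℕ)} (hpos : PosM M) {j : ℕ} (hj : j ≤ 2*M.card) :
    gapsNe (addFirst (j+2) M) = childNe (gapsNe M) j := by
  rw [childNe, gapsNe, gapsNe, card_addFirst hpos, ← List.map_take, List.take_range,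
    show (j+1) ⊓ (2*M.card+1) = j+1 from by omega,
    ← List.map_drop, drop_range j (2*M.card+1) (by omega),
    show 2*(M.card+1)+1 = (j+2) + (2*M.card+1-j) from by omega,
    List.range_add, List.map_append, show j+2 = (j+1)+1 from rfl,
    List.range_succ_eq_map, List.map_cons, List.map_map, List.map_map, List.map_map,
    List.map_map, List.cons_append]
  congr 1
  · exact closedCnt_addFirst_zero hpos j
  congr 1
  · apply List.map_congr_left
    intro i hi
    rw [List.mem_range] at hi
    simp only [Function.comp_apply]
    exact closedCnt_addFirst_mid hpos (by omega)
  · apply List.map_congr_left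
    intro i hi
    simp only [Function.comp_apply]
    rw [show j + 1 + 1 + i = (j+i) + 2 from by omega]
    exact closedCnt_addFirst_late hpos (by omega)

/-! ### The universal coefficients and the symmetric normal form -/

def Coeff : ℕ → ℕ → Multiset ℕ
  | 0, 0 => {0}
  | 0, _+1 => 0
  | _+1, 0 => 0
  | l+1, m+1 => mconv (∑ k ∈ Finset.Icc m l, Coeff l k) (Multiset.range (m+1))

def SymF (l : ℕ) (xs : List ℕ) : Multiset ℕ :=
  ∑ m ∈ Finset.range (l+1), mconv (Coeff l m) (hm m xs)

lemma symF_perm {xs ys : List ℕ} (h : xs.Perm ys) (l : ℕ) : SymF l xs = SymF l ys := by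
  unfold SymF
  exact Finset.sum_congr rfl fun m _ => by rw [hm_perm h m]

lemma hm_one (xs : List ℕ) : hm 1 xs = ↑xs := by
  induction xs with
  | nil => rw [Multiset.coe_nil]; exact hm_nil_succ 0
  | cons a xs ih =>
      rw [hm_cons, hm_zero, ih, Multiset.map_singleton, add_zero, Multiset.singleton_add,
        Multiset.cons_coe]

lemma symF_zero (xs : List ℕ) : SymF 0 xs = {0} := by
  rw [SymF, Finset.sum_range_succ, Finset.sum_range_zero, zero_add, hm_zero,
    show Coeff 0 0 = {0} from rfl, mconv_singleton, Multiset.map_singleton, add_zero]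

lemma symF_one (xs : List ℕ) : SymF 1 xs = ↑xs := by
  rw [SymF, Finset.sum_range_succ, Finset.sum_range_succ, Finset.sum_range_zero, zero_add,
    show Coeff 1 0 = 0 from rfl, mconv_zero, zero_add,
    show Coeff 1 1 = mconv (∑ k ∈ Finset.Icc 0 0, Coeff 0 k) (Multiset.range 1) from rfl,
    Finset.Icc_self, Finset.sum_singleton, show Coeff 0 0 = {0} from rfl, hm_one,
    show Multiset.range 1 = {0} from rfl, mconv_singleton, map_zero_add, mconv_singleton, map_zero_add]

/-- swap a triangular double sum to iterate over the inner index first -/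
lemma tri_swap2 {A : Type*} [AddCommMonoid A] (l : ℕ) (F : ℕ → ℕ → A) :
    ∑ m ∈ Finset.range (l+1), ∑ m' ∈ Finset.range (m+1), F m m'
      = ∑ m' ∈ Finset.range (l+1), ∑ m ∈ Finset.Icc m' l, F m m' := by
  have h1 : ∀ m ∈ Finset.range (l+1), ∑ m' ∈ Finset.range (m+1), F m m'
      = ∑ m' ∈ Finset.range (l+1), if m' ≤ m then F m m' else 0 := by
    intro m hm'
    simp only [Finset.mem_range] at hm'
    rw [← Finset.sum_filter]
    apply Finset.sum_congr _ fun _ _ => rfl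
    ext v
    simp only [Finset.mem_filter, Finset.mem_range]
    omega
  have h2 : ∀ m' ∈ Finset.range (l+1), ∑ m ∈ Finset.Icc m' l, F m m'
      = ∑ m ∈ Finset.range (l+1), if m' ≤ m then F m m' else 0 := by
    intro m' _
    rw [← Finset.sum_filter]
    apply Finset.sum_congr _ fun _ _ => rfl
    ext v
    simp only [Finset.mem_filter, Finset.mem_range, Finset.mem_Icc]
    omega
  rw [Finset.sum_congr rfl h1, Finset.sum_congr rfl h2, Finset.sum_comm]

/-- The one-step recursion for the symmetric form, for any child scheme satisfying the
key identity. -/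
lemma symF_step_gen (l : ℕ) (xs : List ℕ) (ch : ℕ → List ℕ)
    (hch : ∀ m, ∑ j ∈ Finset.range xs.length, (hm m (ch j)).map (xs.getD j 0 + ·)
      = ∑ m' ∈ Finset.range (m+1), mconv (Multiset.range (m'+1)) (hm (m'+1) xs)) :
    ∑ j ∈ Finset.range xs.length, (SymF l (ch j)).map (xs.getD j 0 + ·)
      = SymF (l+1) xs := by
  have expand : ∀ j ∈ Finset.range xs.length,
      (SymF l (ch j)).map (xs.getD j 0 + ·)
        = ∑ m ∈ Finset.range (l+1), mconv (Coeff l m) ((hm m (ch j)).map (xs.getD j 0 + ·)) := by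
    intro j _
    rw [SymF, map_finsum_ms]
    exact Finset.sum_congr rfl fun m _ => (mconv_map_right _ _ _).symm
  rw [Finset.sum_congr rfl expand, Finset.sum_comm]
  have col : ∀ m ∈ Finset.range (l+1),
      ∑ j ∈ Finset.range xs.length, mconv (Coeff l m) ((hm m (ch j)).map (xs.getD j 0 + ·))
        = ∑ m' ∈ Finset.range (m+1),
            mconv (Coeff l m) (mconv (Multiset.range (m'+1)) (hm (m'+1) xs)) := by
    intro m _
    rw [← mconv_finsum_right, hch m, mconv_finsum_right]
  rw [Finset.sum_congr rfl col, tri_swap2]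
  have col2 : ∀ m' ∈ Finset.range (l+1),
      ∑ m ∈ Finset.Icc m' l, mconv (Coeff l m) (mconv (Multiset.range (m'+1)) (hm (m'+1) xs))
        = mconv (Coeff (l+1) (m'+1)) (hm (m'+1) xs) := by
    intro m' _
    rw [show Coeff (l+1) (m'+1)
        = mconv (∑ k ∈ Finset.Icc m' l, Coeff l k) (Multiset.range (m'+1)) from rfl,
      mconv_assoc, mconv_finsum_left]
  rw [Finset.sum_congr rfl col2, SymF,
    Finset.sum_range_succ' (fun m => mconv (Coeff (l+1) m) (hm m xs)) (l+1),
    show Coeff (l+1) 0 = 0 from rfl, mconv_zero, add_zero]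

/-! ### levelM recursion -/

lemma childrenM_eq (M : Finset (ℕ × ℕ)) :
    childrenM M = (Multiset.range (2*M.card+1)).map (fun j => addFirst (j+2) M) := by
  have hval : (Finset.Icc 2 (2*M.card+2)).val
      = (Multiset.range (2*M.card+1)).map (fun j => j + 2) := by
    rw [Nat.Icc_eq_range']
    show (↑(List.range' 2 (2*M.card+2+1-2)) : Multiset ℕ) = _
    rw [show 2*M.card+2+1-2 = 2*M.card+1 from by omega, List.range'_eq_map_range]
    show ((List.range (2*M.card+1)).map (fun x => 2 + x) : Multiset ℕ) = _
    rw [show Multiset.range (2*M.card+1) = ↑(List.range (2*M.card+1)) from rfl,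
      Multiset.map_coe, Multiset.coe_eq_coe]
    exact List.Perm.of_eq (List.map_congr_left fun a _ => by omega)
  rw [childrenM, hval, Multiset.map_map]
  rfl

lemma range_bind (n : ℕ) (f : ℕ → Multiset ℕ) :
    (Multiset.range n).bind f = ∑ j ∈ Finset.range n, f j := by
  induction n with
  | zero => simp
  | succ n ih => rw [Multiset.range_succ, Multiset.cons_bind, ih, Finset.sum_range_succ, add_comm]

lemma levelM_succ_left : ∀ (l : ℕ) (M : Finset (ℕ × ℕ)),
    levelM M (l+1) = (childrenM M).bind (fun c => levelM c l) := by
  intro l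
  induction l with
  | zero =>
      intro M
      show (levelM M 0).bind childrenM = _
      rw [show levelM M 0 = {M} from rfl, Multiset.singleton_bind]
      have : (fun c : Finset (ℕ × ℕ) => levelM c 0) = (fun c => ({c} : Multiset _)) := rfl
      rw [this, Multiset.bind_singleton, Multiset.map_id']
  | succ l ih =>
      intro M
      show (levelM M (l+1)).bind childrenM = _
      rw [ih M, Multiset.bind_assoc]
      rfl

/-! ### Key theorems -/

theorem key_cr : ∀ (l : ℕ) (M : Finset (ℕ × ℕ)), PosM M →
    (levelM M l).map crStat = (SymF l (gapsCr M)).map (crStat M + ·) := by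
  intro l
  induction l with
  | zero =>
      intro M _
      rw [show levelM M 0 = {M} from rfl, Multiset.map_singleton, symF_zero,
        Multiset.map_singleton, add_zero]
  | succ l ih =>
      intro M hpos
      rw [levelM_succ_left, childrenM_eq, Multiset.bind_map, Multiset.map_bind, range_bind]
      have hlen : (gapsCr M).length = 2*M.card+1 := by
        rw [gapsCr, List.length_map, List.length_range]
      have per : ∀ j ∈ Finset.range (2*M.card+1),
          Multiset.map crStat (levelM (addFirst (j+2) M) l)
            = ((SymF l (childCr (gapsCr M) j)).map ((gapsCr M).getD j 0 + ·)).map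
                (crStat M + ·) := by
        intro j hj
        simp only [Finset.mem_range] at hj
        have hget : (gapsCr M).getD j 0 = openCnt M j := by
          rw [gapsCr]; exact getD_map_range (openCnt M) hj
        rw [ih (addFirst (j+2) M) (posM_addFirst M (j+2)), crStat_addFirst hpos,
          gapsCr_addFirst hpos (by omega), map_add_comp, hget]
      rw [Finset.sum_congr rfl per, ← map_finsum_ms]
      congr 1
      rw [show Finset.range (2*M.card+1) = Finset.range (gapsCr M).length from by rw [hlen]]
      exact symF_step_gen l (gapsCr M) (childCr (gapsCr M))
        (fun m => childCr_sum m (gapsCr M))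

theorem key_ne : ∀ (l : ℕ) (M : Finset (ℕ × ℕ)), PosM M →
    (levelM M l).map neStat = (SymF l (gapsNe M)).map (neStat M + ·) := by
  intro l
  induction l with
  | zero =>
      intro M _
      rw [show levelM M 0 = {M} from rfl, Multiset.map_singleton, symF_zero,
        Multiset.map_singleton, add_zero]
  | succ l ih =>
      intro M hpos
      rw [levelM_succ_left, childrenM_eq, Multiset.bind_map, Multiset.map_bind, range_bind]
      have hlen : (gapsNe M).length = 2*M.card+1 := by
        rw [gapsNe, List.length_map, List.length_range]
      have per : ∀ j ∈ Finset.range (2*M.card+1),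
          Multiset.map neStat (levelM (addFirst (j+2) M) l)
            = ((SymF l (childNe (gapsNe M) j)).map ((gapsNe M).getD j 0 + ·)).map
                (neStat M + ·) := by
        intro j hj
        simp only [Finset.mem_range] at hj
        have hget : (gapsNe M).getD j 0 = closedCnt M j := by
          rw [gapsNe]; exact getD_map_range (closedCnt M) hj
        rw [ih (addFirst (j+2) M) (posM_addFirst M (j+2)), neStat_addFirst hpos,
          gapsNe_addFirst hpos (by omega), map_add_comp, hget]
      rw [Finset.sum_congr rfl per, ← map_finsum_ms]
      congr 1
      rw [show Finset.range (2*M.card+1) = Finset.range (gapsNe M).length from by rw [hlen]]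
      exact symF_step_gen l (gapsNe M) (childNe (gapsNe M))
        (fun m => childNe_sum m (gapsNe M))

/-- for `s, t ∈ {cr, ne}` (possibly `s = t`), if the multiset of values of `s` on
`T(M,l)` equals the multiset of values of `t` on `T(N,l)` for `l = 0, 1`, then they are equal
for every `l ≥ 0`. -/
theorem cr_ne_coincide_of_first_two_levels
    (n : ℕ) (M N : Finset (ℕ × ℕ)) (hM : IsMatching n M) (hN : IsMatching n N)
    (s t : Finset (ℕ × ℕ) → ℕ)
    (hs : s = crStat ∨ s = neStat) (ht : t = crStat ∨ t = neStat)
    (h0 : (levelM M 0).map s = (levelM N 0).map t)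
    (h1 : (levelM M 1).map s = (levelM N 1).map t) :
    ∀ l : ℕ, (levelM M l).map s = (levelM N l).map t := by
  have hMpos : PosM M := fun e he => (hM.2.1 e he).2.1
  have hNpos : PosM N := fun e he => (hN.2.1 e he).2.1
  obtain ⟨gsM, keyM⟩ : ∃ gs : List ℕ, ∀ l, (levelM M l).map s = (SymF l gs).map (s M + ·) := by
    rcases hs with rfl | rfl
    · exact ⟨gapsCr M, fun l => key_cr l M hMpos⟩
    · exact ⟨gapsNe M, fun l => key_ne l M hMpos⟩
  obtain ⟨gsN, keyN⟩ : ∃ gs : List ℕ, ∀ l, (levelM N l).map t = (SymF l gs).map (t N + ·) := by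
    rcases ht with rfl | rfl
    · exact ⟨gapsCr N, fun l => key_cr l N hNpos⟩
    · exact ⟨gapsNe N, fun l => key_ne l N hNpos⟩
  have h0' : s M = t N := by
    rw [show levelM M 0 = {M} from rfl, show levelM N 0 = {N} from rfl,
      Multiset.map_singleton, Multiset.map_singleton] at h0
    exact Multiset.singleton_inj.mp h0
  have h1' : (↑gsM : Multiset ℕ) = ↑gsN := by
    have e1 := keyM 1
    have e2 := keyN 1
    rw [symF_one] at e1 e2
    rw [e1, e2, h0'] at h1
    exact Multiset.map_injective (add_right_injective (t N)) h1
  have hperm : gsM.Perm gsN := Multiset.coe_eq_coe.mp h1'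
  intro l
  rw [keyM l, keyN l, symF_perm hperm l, h0']
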